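/- For every real number z > 0, one has z² + z·sin z + 4·cos z − 4 > 0. -/

import Mathlib

open Real Set

private lemma mono_aux {f f' : ℝ → ℝ} (hf : ∀ x, HasDerivAt f (f' x) x)
    (h0 : ∀ x, 0 ≤ x → 0 ≤ f' x) : MonotoneOn f (Ici (0:ℝ)) := by
  apply monotoneOn_of_hasDerivWithinAt_nonneg (convex_Ici 0)
    (fun x _ => (hf x).continuousAt.continuousWithinAt)
    (fun x _ => (hf x).hasDerivWithinAt)
  intro x hx
  rw [interior_Ici] at hx
  exact h0 x hx.le

private lemma sin_ge_aux (x : ℝ) (hx : 0 ≤ x) : x - x^3/6 ≤ Real.sin x := by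
  have hd : ∀ y : ℝ, HasDerivAt (fun t => Real.sin t - (t - t^3/6))
      (Real.cos y - (1 - y^2/2)) y := by
    intro y
    have h1 := (Real.hasDerivAt_sin y).sub
      ((hasDerivAt_id y).sub ((hasDerivAt_pow 3 y).div_const 6))
    refine h1.congr_deriv ?_
    simp; ring
  have := mono_aux hd (fun y hy => by
    nlinarith [Real.one_sub_sq_div_two_le_cos (x := y)]) (self_mem_Ici) hx hx
  simpa using this

private lemma cos_le_aux (x : ℝ) (hx : 0 ≤ x) : Real.cos x ≤ 1 - x^2/2 + x^4/24 := by
  have hd : ∀ y : ℝ, HasDerivAt (fun t => (1 - t^2/2 + t^4/24) - Real.cos t)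
      ((Real.sin y - (y - y^3/6))) y := by
    intro y
    have h1 := ((((hasDerivAt_pow 2 y).div_const 2).const_sub 1).add
      ((hasDerivAt_pow 4 y).div_const 24)).sub (Real.hasDerivAt_cos y)
    refine h1.congr_deriv ?_
    simp; ring
  have := mono_aux hd (fun y hy => sub_nonneg.2 (sin_ge_aux y hy)) self_mem_Ici hx hx
  simp at this; linarith

private lemma sin_le_aux (x : ℝ) (hx : 0 ≤ x) : Real.sin x ≤ x - x^3/6 + x^5/120 := by
  have hd : ∀ y : ℝ, HasDerivAt (fun t => (t - t^3/6 + t^5/120) - Real.sin t)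
      ((1 - y^2/2 + y^4/24) - Real.cos y) y := by
    intro y
    have h1 := (((hasDerivAt_id y).sub ((hasDerivAt_pow 3 y).div_const 6)).add
      ((hasDerivAt_pow 5 y).div_const 120)).sub (Real.hasDerivAt_sin y)
    refine h1.congr_deriv ?_
    simp; ring
  have := mono_aux hd (fun y hy => sub_nonneg.2 (cos_le_aux y hy)) self_mem_Ici hx hx
  simp at this; linarith

private lemma cos_ge_aux (x : ℝ) (hx : 0 ≤ x) :
    1 - x^2/2 + x^4/24 - x^6/720 ≤ Real.cos x := by
  have hd : ∀ y : ℝ, HasDerivAt (fun t => Real.cos t - (1 - t^2/2 + t^4/24 - t^6/720))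
      ((y - y^3/6 + y^5/120) - Real.sin y) y := by
    intro y
    have h1 := (Real.hasDerivAt_cos y).sub
      ((((hasDerivAt_pow 2 y).div_const 2).const_sub 1).add
        ((hasDerivAt_pow 4 y).div_const 24) |>.sub ((hasDerivAt_pow 6 y).div_const 720))
    refine h1.congr_deriv ?_
    simp; ring
  have := mono_aux hd (fun y hy => sub_nonneg.2 (sin_le_aux y hy)) self_mem_Ici hx hx
  simp at this; linarith

private lemma sin_ge_aux7 (x : ℝ) (hx : 0 ≤ x) :
    x - x^3/6 + x^5/120 - x^7/5040 ≤ Real.sin x := by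
  have hd : ∀ y : ℝ, HasDerivAt (fun t => Real.sin t - (t - t^3/6 + t^5/120 - t^7/5040))
      (Real.cos y - (1 - y^2/2 + y^4/24 - y^6/720)) y := by
    intro y
    have h1 := (Real.hasDerivAt_sin y).sub
      (((hasDerivAt_id y).sub ((hasDerivAt_pow 3 y).div_const 6)).add
        ((hasDerivAt_pow 5 y).div_const 120) |>.sub ((hasDerivAt_pow 7 y).div_const 5040))
    refine h1.congr_deriv ?_
    simp; ring
  have := mono_aux hd (fun y hy => sub_nonneg.2 (cos_ge_aux y hy)) self_mem_Ici hx hx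
  simp at this; linarith

theorem stmt2 (z : ℝ) (hz : 0 < z) :
    z ^ 2 + z * Real.sin z + 4 * Real.cos z - 4 > 0 := by
  rcases le_or_gt z 3.5 with h | h
  · have hs := sin_ge_aux7 z hz.le
    have hc := cos_ge_aux z hz.le
    have hzs := mul_le_mul_of_nonneg_left hs hz.le
    have h14 : z^2 < 14 := by nlinarith
    nlinarith [pow_pos hz 6, mul_pos (pow_pos hz 6) (sub_pos.2 h14)]
  · have hs := Real.neg_one_le_sin z
    have hc := Real.neg_one_le_cos z
    nlinarith [sq_nonneg (z - 1)]
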